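/- Let k ≥ 1 be an integer and let F : ℂ → ℂ be holomorphic on the upper half-plane ℍ = {τ ∈ ℂ : Im τ > 0}. For all τ ∈ ℍ with v = Im τ one has (R_{−2} ∘ R_{−4} ∘ ⋯ ∘ R_{−2k+2} ∘ R_{−2k})(F)(τ) = ∑_{r=0}^{k} (−1)^{k−r} · C(k,r) · ((−2k+r)_{k−r} / (4πv)^{k−r}) · 𝒟^r F(τ), where 𝒟 = (2πi)^{−1} d/dτ is (2πi)^{−1} times the complex derivative and C(k,r) is the binomial coefficient. -/

import Mathlib

open Complex Real Polynomial

/-- The Wirtinger derivative ∂g/∂τ = ½(∂g/∂u − i ∂g/∂v) of a real-differentiable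
function `g : ℂ → ℂ`. -/
noncomputable def wirtingerDeriv (g : ℂ → ℂ) (τ : ℂ) : ℂ :=
  (1 / 2) * ((fderiv ℝ g τ) 1 - Complex.I * (fderiv ℝ g τ) Complex.I)

/-- The Maass raising operator of weight `l`:
`(R_l g)(τ) = (1/(2πi)) ∂g/∂τ − (l/(4π Im τ)) g(τ)`. -/
noncomputable def maassRaise (l : ℤ) (g : ℂ → ℂ) : ℂ → ℂ :=
  fun τ => (1 / (2 * (π : ℂ) * Complex.I)) * wirtingerDeriv g τ
    - ((l : ℂ) / (4 * (π : ℂ) * (τ.im : ℂ))) * g τ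

/-- `raiseIter k F j` is `R_{−2(k−j+1)} ∘ ⋯ ∘ R_{−2k+2} ∘ R_{−2k}` applied to `F`;
in particular `raiseIter k F k = (R_{−2} ∘ ⋯ ∘ R_{−2k+2} ∘ R_{−2k})(F)`. -/
noncomputable def raiseIter (k : ℕ) (F : ℂ → ℂ) : ℕ → ℂ → ℂ
  | 0 => F
  | j + 1 => maassRaise (-2 * ((k : ℤ) - (j : ℤ))) (raiseIter k F j)

/-- The operator 𝒟 = (2πi)⁻¹ d/dτ. -/
noncomputable def DOp (g : ℂ → ℂ) : ℂ → ℂ :=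
  fun τ => (1 / (2 * (π : ℂ) * Complex.I)) * deriv g τ

lemma wd_congr {f g : ℂ → ℂ} {τ : ℂ} (h : f =ᶠ[nhds τ] g) :
    wirtingerDeriv f τ = wirtingerDeriv g τ := by
  unfold wirtingerDeriv; rw [h.fderiv_eq]

lemma wd_holo {g : ℂ → ℂ} {τ : ℂ} (h : DifferentiableAt ℂ g τ) :
    wirtingerDeriv g τ = deriv g τ := by
  unfold wirtingerDeriv
  rw [(h.hasFDerivAt.restrictScalars ℝ).fderiv]
  have h1 : (fderiv ℂ g τ) 1 = deriv g τ := rfl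
  have hI : (fderiv ℂ g τ) Complex.I = Complex.I * deriv g τ := by
    have := (fderiv ℂ g τ).map_smul Complex.I (1 : ℂ)
    simp only [smul_eq_mul, mul_one] at this
    rw [this, h1]
  simp only [ContinuousLinearMap.coe_restrictScalars', Function.comp]
  rw [h1, hI]
  have : Complex.I * (Complex.I * deriv g τ) = - deriv g τ := by
    rw [← mul_assoc, Complex.I_mul_I]; ring
  rw [this]; ring

lemma wd_mul {f g : ℂ → ℂ} {τ : ℂ} (hf : DifferentiableAt ℝ f τ)
    (hg : DifferentiableAt ℝ g τ) :
    wirtingerDeriv (fun z => f z * g z) τ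
      = wirtingerDeriv f τ * g τ + f τ * wirtingerDeriv g τ := by
  unfold wirtingerDeriv
  rw [fderiv_fun_mul hf hg]
  simp only [ContinuousLinearMap.add_apply, ContinuousLinearMap.smul_apply, smul_eq_mul]
  ring

lemma wd_const (c : ℂ) (τ : ℂ) : wirtingerDeriv (fun _ => c) τ = 0 := by
  unfold wirtingerDeriv; simp

lemma wd_const_mul {f : ℂ → ℂ} {τ : ℂ} (c : ℂ) (hf : DifferentiableAt ℝ f τ) :
    wirtingerDeriv (fun z => c * f z) τ = c * wirtingerDeriv f τ := by
  unfold wirtingerDeriv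
  rw [fderiv_const_mul hf c]
  simp only [ContinuousLinearMap.smul_apply, smul_eq_mul]
  ring

lemma wd_sum {ι : Type*} {s : Finset ι} {f : ι → ℂ → ℂ} {τ : ℂ}
    (h : ∀ i ∈ s, DifferentiableAt ℝ (f i) τ) :
    wirtingerDeriv (fun z => ∑ i ∈ s, f i z) τ = ∑ i ∈ s, wirtingerDeriv (f i) τ := by
  unfold wirtingerDeriv
  rw [fderiv_fun_sum h]
  simp only [ContinuousLinearMap.sum_apply]
  rw [Finset.mul_sum, ← Finset.sum_sub_distrib, Finset.mul_sum]

noncomputable def auxV : ℂ → ℂ := fun z => ((z.im : ℝ) : ℂ)⁻¹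

lemma auxV_hasFDerivAt {τ : ℂ} (hτ : τ.im ≠ 0) :
    HasFDerivAt auxV
      ((((1 : ℂ →L[ℂ] ℂ).smulRight (-(((τ.im : ℝ) : ℂ) ^ 2)⁻¹)).restrictScalars ℝ).comp
        (Complex.ofRealCLM.comp Complex.imCLM)) τ := by
  have hinner : HasFDerivAt (fun z : ℂ => ((z.im : ℝ) : ℂ))
      (Complex.ofRealCLM.comp Complex.imCLM) τ :=
    (Complex.ofRealCLM.comp Complex.imCLM).hasFDerivAt
  have hne : ((τ.im : ℝ) : ℂ) ≠ 0 := Complex.ofReal_ne_zero.2 hτ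
  have houter := ((hasDerivAt_inv hne).hasFDerivAt).restrictScalars ℝ
  exact houter.comp τ hinner

lemma auxV_diff {τ : ℂ} (hτ : τ.im ≠ 0) : DifferentiableAt ℝ auxV τ :=
  (auxV_hasFDerivAt hτ).differentiableAt

lemma wd_auxV {τ : ℂ} (hτ : τ.im ≠ 0) :
    wirtingerDeriv auxV τ = Complex.I / 2 * auxV τ ^ 2 := by
  unfold wirtingerDeriv
  rw [(auxV_hasFDerivAt hτ).fderiv]
  simp only [ContinuousLinearMap.coe_comp', Function.comp_apply,
    ContinuousLinearMap.coe_restrictScalars', Complex.imCLM_apply, Complex.ofRealCLM_apply,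
    ContinuousLinearMap.smulRight_apply, ContinuousLinearMap.one_apply, smul_eq_mul]
  simp only [Complex.one_im, Complex.I_im, Complex.ofReal_zero, Complex.ofReal_one,
    zero_mul, one_mul]
  rw [auxV, inv_pow]
  ring

lemma auxV_pow_diff {τ : ℂ} (hτ : τ.im ≠ 0) (m : ℕ) :
    DifferentiableAt ℝ (fun z => auxV z ^ m) τ := by
  induction m with
  | zero => simp
  | succ m ih =>
      simp only [pow_succ]
      exact ih.mul (auxV_diff hτ)

lemma wd_auxV_pow {τ : ℂ} (hτ : τ.im ≠ 0) (m : ℕ) :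
    wirtingerDeriv (fun z => auxV z ^ m) τ = Complex.I / 2 * m * auxV τ ^ (m + 1) := by
  induction m with
  | zero =>
      simp only [pow_zero]
      rw [wd_const]
      simp
  | succ m ih =>
      simp only [pow_succ]
      rw [wd_mul (auxV_pow_diff hτ m) (auxV_diff hτ), ih, wd_auxV hτ]
      push_cast
      ring

noncomputable def auxA (k j r : ℕ) : ℂ :=
  (-1) ^ (j - r) * (j.choose r : ℂ) *
    (ascPochhammer ℂ (j - r)).eval (-2 * (k : ℂ) + (r : ℂ)) / (4 * (π : ℂ)) ^ (j - r)

lemma auxA_self (k j : ℕ) : auxA k j j = 1 := by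
  simp [auxA]

lemma auxA_succ_self (k j : ℕ) : auxA k j (j + 1) = 0 := by
  simp [auxA, Nat.choose_succ_self]

lemma hπC : (π : ℂ) ≠ 0 := Complex.ofReal_ne_zero.2 Real.pi_ne_zero

lemma auxA_rec (k j r : ℕ) (hr : r ≤ j + 1) :
    auxA k (j + 1) r =
      auxA k j r * ((2 * (k : ℂ) - (j : ℂ) - (r : ℂ)) / (4 * (π : ℂ)))
        + (if r = 0 then 0 else auxA k j (r - 1)) := by
  rcases Nat.eq_or_lt_of_le hr with h | h
  · -- r = j + 1
    subst h
    rw [auxA_self, auxA_succ_self, if_neg (Nat.succ_ne_zero j)]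
    simp [auxA_self]
  · -- r ≤ j
    have hrj : r ≤ j := Nat.lt_succ_iff.mp h
    rcases r with _ | s
    · -- r = 0
      simp only [if_pos rfl, ↓reduceIte, add_zero, Nat.sub_zero, Nat.cast_zero]
      unfold auxA
      simp only [Nat.sub_zero, Nat.choose_zero_right, Nat.cast_one, Nat.cast_zero, add_zero]
      rw [ascPochhammer_succ_right, Polynomial.eval_mul, Polynomial.eval_add,
        Polynomial.eval_X, Polynomial.eval_natCast]
      rw [pow_succ (4 * (π:ℂ)) j, pow_succ (-1 : ℂ) j]
      field_simp
      ring
    · -- r = s + 1, s + 1 ≤ j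
      rw [if_neg (Nat.succ_ne_zero s), Nat.succ_sub_one]
      obtain ⟨m, rfl⟩ := Nat.exists_eq_add_of_le hrj
      have e1 : s + 1 + m + 1 - (s + 1) = m + 1 := by omega
      have e2 : s + 1 + m - (s + 1) = m := by omega
      have e3 : s + 1 + m - s = m + 1 := by omega
      unfold auxA
      rw [e1, e2, e3]
      have hP1 : (ascPochhammer ℂ (m+1)).eval (-2 * (k:ℂ) + ((s+1 : ℕ) : ℂ))
          = (ascPochhammer ℂ m).eval (-2 * (k:ℂ) + ((s+1 : ℕ) : ℂ))
            * ((-2 * (k:ℂ) + ((s+1 : ℕ) : ℂ)) + m) := by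
        rw [ascPochhammer_succ_right, Polynomial.eval_mul, Polynomial.eval_add,
          Polynomial.eval_X, Polynomial.eval_natCast]
      have hP2 : (ascPochhammer ℂ (m+1)).eval (-2 * (k:ℂ) + (s : ℂ))
          = (-2 * (k:ℂ) + (s : ℂ))
            * (ascPochhammer ℂ m).eval (-2 * (k:ℂ) + ((s+1 : ℕ) : ℂ)) := by
        rw [ascPochhammer_succ_left, Polynomial.eval_mul, Polynomial.eval_X,
          Polynomial.eval_comp, Polynomial.eval_add, Polynomial.eval_X, Polynomial.eval_one]
        push_cast
        ring_nf
      rw [hP1, hP2]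
      set P := (ascPochhammer ℂ m).eval (-2 * (k:ℂ) + ((s+1 : ℕ) : ℂ)) with hP
      have hpas : (((s + 1 + m + 1).choose (s+1) : ℕ) : ℂ)
          = (((s + 1 + m).choose s : ℕ) : ℂ) + (((s + 1 + m).choose (s+1) : ℕ) : ℂ) := by
        have := Nat.choose_succ_succ' (s + 1 + m) s
        exact_mod_cast congrArg (Nat.cast : ℕ → ℂ) this
      have hid : (((s + 1 + m).choose (s+1) : ℕ) : ℂ) * ((s:ℂ) + 1)
          = (((s + 1 + m).choose s : ℕ) : ℂ) * ((m : ℂ) + 1) := by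
        have h0 := Nat.choose_succ_right_eq (s + 1 + m) s
        have h1 : s + 1 + m - s = m + 1 := by omega
        rw [h1] at h0
        exact_mod_cast congrArg (Nat.cast : ℕ → ℂ) h0
      push_cast
      linear_combination
        (-(-1:ℂ)^m * P * (((s:ℂ) + 1 + (m:ℂ)) - 2*(k:ℂ)) / (4*(π:ℂ))^(m+1)) * hpas
        + ((-1:ℂ)^m * P / (4*(π:ℂ))^(m+1)) * hid

lemma DOp_iter_analytic {F : ℂ → ℂ} (hF : DifferentiableOn ℂ F {z : ℂ | 0 < z.im}) (r : ℕ) :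
    AnalyticOnNhd ℂ (DOp^[r] F) {z : ℂ | 0 < z.im} := by
  have hU : IsOpen {z : ℂ | 0 < z.im} := isOpen_lt continuous_const Complex.continuous_im
  induction r with
  | zero => simpa using hF.analyticOnNhd hU
  | succ r ih =>
      rw [Function.iterate_succ_apply']
      intro τ hτ
      have : AnalyticAt ℂ (fun σ : ℂ => (1 / (2 * (π : ℂ) * Complex.I)) * deriv (DOp^[r] F) σ) τ :=
        analyticAt_const.mul ((ih.deriv) τ hτ)
      exact this

lemma raiseIter_formula (k : ℕ) (F : ℂ → ℂ)
    (hF : DifferentiableOn ℂ F {z : ℂ | 0 < z.im}) (j : ℕ) :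
    ∀ τ : ℂ, 0 < τ.im →
      raiseIter k F j τ
        = ∑ r ∈ Finset.range (j + 1), auxA k j r * auxV τ ^ (j - r) * DOp^[r] F τ := by
  induction j with
  | zero =>
      intro τ hτ
      simp [raiseIter, auxA]
  | succ j ih =>
      intro τ hτ
      have hU : IsOpen {z : ℂ | 0 < z.im} := isOpen_lt continuous_const Complex.continuous_im
      have hvne : τ.im ≠ 0 := ne_of_gt hτ
      have hvC : ((τ.im : ℝ) : ℂ) ≠ 0 := Complex.ofReal_ne_zero.2 hvne
      have hgC : ∀ r : ℕ, DifferentiableAt ℂ (DOp^[r] F) τ :=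
        fun r => (DOp_iter_analytic hF r τ hτ).differentiableAt
      have hpw : ∀ r : ℕ, DifferentiableAt ℝ (fun z => auxA k j r * auxV z ^ (j - r)) τ :=
        fun r => (auxV_pow_diff hvne (j - r)).const_mul _
      have hterm : ∀ r : ℕ, DifferentiableAt ℝ
          (fun z => auxA k j r * auxV z ^ (j - r) * DOp^[r] F z) τ :=
        fun r => (hpw r).mul ((hgC r).restrictScalars ℝ)
      have hev : raiseIter k F j =ᶠ[nhds τ]
          (fun σ => ∑ r ∈ Finset.range (j + 1), auxA k j r * auxV σ ^ (j - r) * DOp^[r] F σ) := by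
        filter_upwards [hU.mem_nhds hτ] with σ hσ
        exact ih σ hσ
      have hD : ∀ r : ℕ, DOp^[r + 1] F τ
          = 1 / (2 * (π : ℂ) * Complex.I) * deriv (DOp^[r] F) τ := by
        intro r
        rw [Function.iterate_succ_apply']
        rfl
      have hwd : ∀ r : ℕ,
          wirtingerDeriv (fun z => auxA k j r * auxV z ^ (j - r) * DOp^[r] F z) τ
          = auxA k j r * (Complex.I / 2 * ((j - r : ℕ) : ℂ) * auxV τ ^ ((j - r) + 1))
              * DOp^[r] F τ
            + auxA k j r * auxV τ ^ (j - r) * deriv (DOp^[r] F) τ := by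
        intro r
        rw [wd_mul (hpw r) ((hgC r).restrictScalars ℝ),
            wd_const_mul _ (auxV_pow_diff hvne (j - r)), wd_auxV_pow hvne (j - r),
            wd_holo (hgC r)]
      rw [raiseIter]
      show 1 / (2 * (π : ℂ) * Complex.I) * wirtingerDeriv (raiseIter k F j) τ
          - (((-2 * ((k : ℤ) - (j : ℤ)) : ℤ) : ℂ) / (4 * (π : ℂ) * (τ.im : ℂ)))
            * raiseIter k F j τ = _
      rw [wd_congr hev, ih τ hτ]
      rw [wd_sum (fun r _ => hterm r)]
      simp only [hwd]
      rw [Finset.mul_sum, Finset.mul_sum, ← Finset.sum_sub_distrib]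
      have hstep : ∀ r ∈ Finset.range (j + 1),
          1 / (2 * (π : ℂ) * Complex.I) *
              (auxA k j r * (Complex.I / 2 * ((j - r : ℕ) : ℂ) * auxV τ ^ ((j - r) + 1))
                  * DOp^[r] F τ
                + auxA k j r * auxV τ ^ (j - r) * deriv (DOp^[r] F) τ)
            - (((-2 * ((k : ℤ) - (j : ℤ)) : ℤ) : ℂ) / (4 * (π : ℂ) * (τ.im : ℂ)))
              * (auxA k j r * auxV τ ^ (j - r) * DOp^[r] F τ)
          = auxA k j r * ((2 * (k : ℂ) - (j : ℂ) - (r : ℂ)) / (4 * (π : ℂ)))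
              * auxV τ ^ ((j - r) + 1) * DOp^[r] F τ
            + auxA k j r * auxV τ ^ (j - r) * DOp^[r + 1] F τ := by
        intro r hr
        have hrj : r ≤ j := Nat.lt_succ_iff.mp (Finset.mem_range.mp hr)
        have hcast : ((j - r : ℕ) : ℂ) = (j : ℂ) - (r : ℂ) := by
          push_cast [hrj]; ring
        have hl : (((-2 * ((k : ℤ) - (j : ℤ)) : ℤ) : ℂ)) = -2 * ((k : ℂ) - (j : ℂ)) := by
          push_cast; ring
        have hc2 : 1 / (2 * (π : ℂ) * Complex.I) = -Complex.I / (2 * (π : ℂ)) := by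
          rw [div_eq_div_iff (by simp [Real.pi_ne_zero, Complex.I_ne_zero]) (by simp [Real.pi_ne_zero])]
          linear_combination 2 * (π : ℂ) * Complex.I_sq
        rw [hD r, hcast, hl, hc2]
        rw [show auxV τ = ((τ.im : ℝ) : ℂ)⁻¹ from rfl]
        simp only [pow_succ]
        generalize (((τ.im : ℝ) : ℂ)⁻¹) ^ (j - r) = X
        rw [inv_eq_one_div ((τ.im : ℝ) : ℂ)]
        field_simp [hπC, hvC]
        linear_combination (-4 * (auxA k j r) * ((j:ℂ) - (r:ℂ)) * X * DOp^[r] F τ) * Complex.I_sq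
      rw [Finset.sum_congr rfl hstep, Finset.sum_add_distrib]
      -- now handle the RHS
      have hRHS : ∑ r ∈ Finset.range (j + 1 + 1),
            auxA k (j + 1) r * auxV τ ^ (j + 1 - r) * DOp^[r] F τ
          = (∑ r ∈ Finset.range (j + 1),
              auxA k j r * ((2 * (k : ℂ) - (j : ℂ) - (r : ℂ)) / (4 * (π : ℂ)))
                * auxV τ ^ ((j - r) + 1) * DOp^[r] F τ)
            + ∑ r ∈ Finset.range (j + 1),
                auxA k j r * auxV τ ^ (j - r) * DOp^[r + 1] F τ := by
        have h1 : ∀ r ∈ Finset.range (j + 1 + 1),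
            auxA k (j + 1) r * auxV τ ^ (j + 1 - r) * DOp^[r] F τ
            = auxA k j r * ((2 * (k : ℂ) - (j : ℂ) - (r : ℂ)) / (4 * (π : ℂ)))
                * auxV τ ^ (j + 1 - r) * DOp^[r] F τ
              + (if r = 0 then 0 else auxA k j (r - 1)) * auxV τ ^ (j + 1 - r) * DOp^[r] F τ := by
          intro r hr
          have hrj : r ≤ j + 1 := Nat.lt_succ_iff.mp (Finset.mem_range.mp hr)
          rw [auxA_rec k j r hrj]
          ring
        rw [Finset.sum_congr rfl h1, Finset.sum_add_distrib]
        congr 1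
        · -- first sums match
          rw [Finset.sum_range_succ, auxA_succ_self]
          simp only [mul_zero, zero_mul, add_zero]
          apply Finset.sum_congr rfl
          intro r hr
          have hrj : r ≤ j := Nat.lt_succ_iff.mp (Finset.mem_range.mp hr)
          have : j + 1 - r = (j - r) + 1 := by omega
          rw [this]
        · -- second sums match
          rw [Finset.sum_range_succ']
          simp [Nat.succ_sub_succ]
      rw [hRHS]


theorem stmt0 (k : ℕ) (hk : 1 ≤ k) (F : ℂ → ℂ)
    (hF : DifferentiableOn ℂ F {z : ℂ | 0 < z.im}) (τ : ℂ) (hτ : 0 < τ.im) :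
    raiseIter k F k τ =
      ∑ r ∈ Finset.range (k + 1),
        (-1 : ℂ) ^ (k - r) * (k.choose r : ℂ) *
          ((ascPochhammer ℂ (k - r)).eval (-2 * (k : ℂ) + (r : ℂ)) /
            (4 * (π : ℂ) * (τ.im : ℂ)) ^ (k - r)) *
          (DOp^[r] F τ) := by
  rw [raiseIter_formula k F hF k τ hτ]
  apply Finset.sum_congr rfl
  intro r hr
  have hvC : ((τ.im : ℝ) : ℂ) ≠ 0 := Complex.ofReal_ne_zero.2 (ne_of_gt hτ)
  rw [show auxV τ = ((τ.im : ℝ) : ℂ)⁻¹ from rfl]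
  unfold auxA
  rw [mul_pow (4 * (π : ℂ)) ((τ.im : ℝ) : ℂ) (k - r), inv_pow]
  field_simp
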